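/- Let 1 ≤ g ≤ ⌊(n−k−2)/2⌋ and let G^k_n be the graph obtained from three disjoint cliques K_{n−k−g}, K_{k−1}, K_{g+1} by adding all edges between K_{k−1} and K_{n−k−g} and all edges between K_{k−1} and K_{g+1}. Then κ^g(G^k_n) = k − 1. -/
import Mathlib


open SimpleGraph

/-- `F` is a g-good-neighbor cut of `G`: removing `F` disconnects `G`
and every vertex outside `F` has at least `g` neighbors outside `F`. -/
def IsGNCut {V : Type*} [Fintype V] (G : SimpleGraph V) (g : ℕ) (F : Finset V) : Prop :=
  ¬ (G.induce ((↑F : Set V)ᶜ)).Preconnected ∧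
    ∀ v : V, v ∉ F → g ≤ (G.neighborSet v \ (↑F : Set V)).ncard

/-- The g-good-neighbor connectivity `κ^g(G)`: minimum size of a g-good-neighbor cut. -/
noncomputable def gnConn {V : Type*} [Fintype V] (G : SimpleGraph V) (g : ℕ) : ℕ :=
  sInf {m | ∃ F : Finset V, IsGNCut G g F ∧ F.card = m}

/-- Classical vertex connectivity (as minimum size of a vertex cut). -/
noncomputable def vConn {V : Type*} [Fintype V] (G : SimpleGraph V) : ℕ :=
  sInf {m | ∃ F : Finset V, ¬ (G.induce ((↑F : Set V)ᶜ)).Preconnected ∧ F.card = m}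

/-- G^k_n: cliques K_{n−k−g}, K_{k−1}, K_{g+1}, joining the middle clique
completely to each of the other two. -/
def Gkn (n k g : ℕ) : SimpleGraph (Fin (n - k - g) ⊕ Fin (k - 1) ⊕ Fin (g + 1)) :=
  SimpleGraph.fromRel (fun x y =>
    match x, y with
    | Sum.inl _, Sum.inl _ => True
    | Sum.inr (Sum.inl _), Sum.inr (Sum.inl _) => True
    | Sum.inr (Sum.inr _), Sum.inr (Sum.inr _) => True
    | Sum.inr (Sum.inl _), Sum.inl _ => True
    | Sum.inl _, Sum.inr (Sum.inl _) => True
    | Sum.inr (Sum.inl _), Sum.inr (Sum.inr _) => True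
    | Sum.inr (Sum.inr _), Sum.inr (Sum.inl _) => True
    | _, _ => False)

namespace Stmt15Aux

def midF (n k g : ℕ) : Finset (Fin (n - k - g) ⊕ Fin (k - 1) ⊕ Fin (g + 1)) :=
  Finset.univ.image (fun y : Fin (k - 1) => Sum.inr (Sum.inl y))

lemma mem_midF (n k g : ℕ) (v) : v ∈ midF n k g ↔ ∃ y, Sum.inr (Sum.inl y) = v := by
  simp [midF]

lemma card_midF (n k g : ℕ) : (midF n k g).card = k - 1 := by
  rw [midF, Finset.card_image_of_injective _ (fun x y h => by simpa using h)]
  simp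

lemma adj_mid (n k g : ℕ) (y : Fin (k - 1)) (z) (hz : z ≠ Sum.inr (Sum.inl y)) :
    (Gkn n k g).Adj z (Sum.inr (Sum.inl y)) := by
  refine ⟨hz, Or.inr ?_⟩
  rcases z with x | x | x <;> trivial

lemma walk_inl (n k g : ℕ) (s : Set (Fin (n - k - g) ⊕ Fin (k - 1) ⊕ Fin (g + 1)))
    (hs : ∀ m : Fin (k - 1), Sum.inr (Sum.inl m) ∉ s)
    {u v : s} (w : ((Gkn n k g).induce s).Walk u v)
    (hu : ∃ x, u.val = Sum.inl x) : ∃ x, v.val = Sum.inl x := by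
  induction w with
  | nil => exact hu
  | @cons a b c h p ih =>
    apply ih
    obtain ⟨x, hx⟩ := hu
    have hadj : (Gkn n k g).Adj a.val b.val := h
    rw [hx] at hadj
    rcases hb : b.val with z | z | z
    · exact ⟨z, rfl⟩
    · exact absurd (hb ▸ b.2) (hs z)
    · rw [hb] at hadj
      simp [Gkn, fromRel_adj] at hadj

lemma nb_inl (n k g : ℕ) (x : Fin (n - k - g)) :
    (Gkn n k g).neighborSet (Sum.inl x) \ (↑(midF n k g) : Set _)
      = Sum.inl '' {z | z ≠ x} := by
  ext w
  rcases w with z | z | z <;>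
    simp [Gkn, mem_neighborSet, fromRel_adj, midF, ne_comm]

lemma nb_inrr (n k g : ℕ) (x : Fin (g + 1)) :
    (Gkn n k g).neighborSet (Sum.inr (Sum.inr x)) \ (↑(midF n k g) : Set _)
      = (fun z => Sum.inr (Sum.inr z)) '' {z | z ≠ x} := by
  ext w
  rcases w with z | z | z <;>
    simp [Gkn, mem_neighborSet, fromRel_adj, midF, ne_comm]

lemma ncard_ne {α : Type*} [Fintype α] [DecidableEq α] (x : α) :
    ({z : α | z ≠ x}).ncard = Fintype.card α - 1 := by
  have : {z : α | z ≠ x} = (↑({x}ᶜ : Finset α) : Set α) := by ext z; simp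
  rw [this, Set.ncard_coe_finset, Finset.card_compl, Finset.card_singleton]

end Stmt15Aux

/-- For 1 ≤ g ≤ ⌊(n−k−2)/2⌋ (i.e. k + 2g + 2 ≤ n) and k ≥ 1: κ^g(G^k_n) = k − 1. -/
theorem stmt15 (n k g : ℕ) (hg : 1 ≤ g) (hk : 1 ≤ k) (hbound : k + 2 * g + 2 ≤ n) :
    gnConn (Gkn n k g) g = k - 1 := by
  have ha : g + 2 ≤ n - k - g := by omega
  have h0a : 0 < n - k - g := by omega
  have hcut : IsGNCut (Gkn n k g) g (Stmt15Aux.midF n k g) := by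
    constructor
    · intro hpc
      have hmemu : (Sum.inl ⟨0, h0a⟩ : _) ∈ (↑(Stmt15Aux.midF n k g) : Set (Fin (n - k - g) ⊕ Fin (k - 1) ⊕ Fin (g + 1)))ᶜ := by
        simp [Stmt15Aux.midF]
      have hmemv : (Sum.inr (Sum.inr (0 : Fin (g+1))) : _) ∈ (↑(Stmt15Aux.midF n k g) : Set (Fin (n - k - g) ⊕ Fin (k - 1) ⊕ Fin (g + 1)))ᶜ := by
        simp [Stmt15Aux.midF]
      obtain ⟨w⟩ := hpc ⟨_, hmemu⟩ ⟨_, hmemv⟩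
      obtain ⟨x, hx⟩ := Stmt15Aux.walk_inl n k g _ (fun m => by simp [Stmt15Aux.midF]) w ⟨_, rfl⟩
      simp at hx
    · intro v hv
      rcases v with x | x | x
      · rw [Stmt15Aux.nb_inl, Set.ncard_image_of_injective _ Sum.inl_injective,
          Stmt15Aux.ncard_ne]
        simp only [Fintype.card_fin]
        omega
      · exact absurd ((Stmt15Aux.mem_midF n k g _).2 ⟨x, rfl⟩) hv
      · rw [Stmt15Aux.nb_inrr, Set.ncard_image_of_injective _ (fun a b h => by simpa using h),
          Stmt15Aux.ncard_ne]
        simp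
  apply le_antisymm
  · exact Nat.sInf_le ⟨_, hcut, Stmt15Aux.card_midF n k g⟩
  · apply le_csInf
    · exact ⟨k - 1, Stmt15Aux.midF n k g, hcut, Stmt15Aux.card_midF n k g⟩
    rintro m ⟨F, hF, rfl⟩
    have hsub : Stmt15Aux.midF n k g ⊆ F := by
      intro v hv
      rw [Stmt15Aux.mem_midF] at hv
      obtain ⟨y, rfl⟩ := hv
      by_contra hm
      apply hF.1
      have hmem : (Sum.inr (Sum.inl y) : _) ∈ (↑F : Set (Fin (n - k - g) ⊕ Fin (k - 1) ⊕ Fin (g + 1)))ᶜ := by simpa using hm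
      have key : ∀ z : ((↑F : Set (Fin (n - k - g) ⊕ Fin (k - 1) ⊕ Fin (g + 1)))ᶜ : Set (Fin (n - k - g) ⊕ Fin (k - 1) ⊕ Fin (g + 1))),
          ((Gkn n k g).induce _).Reachable z ⟨_, hmem⟩ := by
        intro z
        by_cases hz : z.val = Sum.inr (Sum.inl y)
        · have he : (⟨_, hmem⟩ : ((↑F : Set (Fin (n - k - g) ⊕ Fin (k - 1) ⊕ Fin (g + 1)))ᶜ : Set (Fin (n - k - g) ⊕ Fin (k - 1) ⊕ Fin (g + 1)))) = z := Subtype.ext hz.symm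
          rw [he]
        · exact SimpleGraph.Adj.reachable
            (by exact Stmt15Aux.adj_mid n k g y z.val hz)
      intro u w
      exact (key u).trans (key w).symm
    calc k - 1 = (Stmt15Aux.midF n k g).card := (Stmt15Aux.card_midF n k g).symm
      _ ≤ F.card := Finset.card_le_card hsub
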